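/- Let n ≥ 2, let ε₀ ≥ 0 and σ be real numbers with σ ≥ (n−2)·π/2 + ε₀, and let λ₁ ≥ λ₂ ≥ … ≥ λₙ be real numbers with ∑_{i=1}^n arctan(λᵢ) = σ. Then λ_{n−1} + λₙ ≥ tan(ε₀/2). -/
import Mathlib


open Real Finset

/-- `tan a ≤ x ↔ a ≤ arctan x` for `-π/2 < a < π/2`. -/
lemma tan_le_iff_le_arctan {a x : ℝ} (h1 : -(π/2) < a) (h2 : a < π/2) :
    Real.tan a ≤ x ↔ a ≤ Real.arctan x := by
  rw [← Real.arctan_strictMono.le_iff_le (a := Real.tan a) (b := x),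
    Real.arctan_tan h1 h2]

/-- Key two-variable lemma: if `arctan x + arctan y ≥ ε ≥ 0` and `y ≤ x`,
then `x + y ≥ tan (ε/2)`. -/
lemma key_arctan_pair {x y ε : ℝ} (hε : 0 ≤ ε) (hxy : y ≤ x)
    (h : ε ≤ Real.arctan x + Real.arctan y) : Real.tan (ε / 2) ≤ x + y := by
  have hx2 := Real.arctan_lt_pi_div_two x
  have hy2 := Real.arctan_lt_pi_div_two y
  have hπ : 0 < π := Real.pi_pos
  have hε2 : ε / 2 < π / 2 := by linarith
  rcases le_or_gt 0 y with hy | hy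
  · -- y ≥ 0 : x ≥ tan(ε/2) and y ≥ 0
    have hay : 0 ≤ Real.arctan y := by
      have := Real.arctan_strictMono.monotone hy
      simpa using this
    have haxy : Real.arctan y ≤ Real.arctan x := Real.arctan_strictMono.monotone hxy
    have : Real.tan (ε / 2) ≤ x :=
      (tan_le_iff_le_arctan (by linarith) hε2).mpr (by linarith)
    linarith
  · -- y < 0
    have hay : Real.arctan y < 0 := by
      have := Real.arctan_strictMono hy
      simpa using this
    have hεπ : ε < π / 2 := by linarith
    have hx0 : 0 < x := by
      by_contra hx
      push_neg at hx
      have : Real.arctan x ≤ 0 := by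
        have := Real.arctan_strictMono.monotone hx
        simpa using this
      linarith
    have hxy1 : x * y < 1 := lt_of_le_of_lt (by nlinarith) one_pos
    have hadd := Real.arctan_add hxy1
    have hz : Real.tan ε ≤ (x + y) / (1 - x * y) :=
      (tan_le_iff_le_arctan (by linarith) hεπ).mpr (by rw [← hadd]; exact h)
    have htan0 : 0 ≤ Real.tan ε :=
      Real.tan_nonneg_of_nonneg_of_le_pi_div_two hε hεπ.le
    have htanle : Real.tan (ε / 2) ≤ Real.tan ε :=
      (tan_le_iff_le_arctan (by linarith) hε2).mpr
        (by rw [Real.arctan_tan (by linarith) hεπ]; linarith)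
    have hpos : (0:ℝ) < 1 - x * y := by nlinarith
    have hfin : Real.tan ε * (1 - x * y) ≤ x + y := (le_div_iff₀ hpos).mp hz
    have hprod : 0 ≤ Real.tan ε * (-(x * y)) :=
      mul_nonneg htan0 (by nlinarith)
    nlinarith

/-- Wang–Yuan arithmetic lemma, part (i): if `λ₁ ≥ … ≥ λₙ` satisfy
`∑ arctan λᵢ = σ ≥ (n-2)π/2 + ε₀` with `ε₀ ≥ 0`, then
`λ_{n-1} + λₙ ≥ tan (ε₀/2)`. -/
theorem dHYM_eigenvalue_pair_sum_lower_bound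
    (n : ℕ) (hn : 2 ≤ n) (ε₀ σ : ℝ) (hε : 0 ≤ ε₀)
    (hσ : ((n : ℝ) - 2) * π / 2 + ε₀ ≤ σ)
    (lam : Fin n → ℝ) (hlam : Antitone lam)
    (hsum : ∑ i, Real.arctan (lam i) = σ) :
    Real.tan (ε₀ / 2) ≤ lam ⟨n - 2, by omega⟩ + lam ⟨n - 1, by omega⟩ := by
  set i₁ : Fin n := ⟨n - 2, by omega⟩
  set i₂ : Fin n := ⟨n - 1, by omega⟩
  have hne : i₂ ≠ i₁ := by
    simp only [i₁, i₂, Fin.ne_iff_vne]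
    omega
  set f : Fin n → ℝ := fun i => Real.arctan (lam i) with hf
  -- split off the two last terms
  have h1 : ∑ i, f i = f i₁ + ∑ i ∈ univ.erase i₁, f i :=
    (Finset.add_sum_erase _ f (mem_univ i₁)).symm
  have h2 : ∑ i ∈ univ.erase i₁, f i = f i₂ + ∑ i ∈ (univ.erase i₁).erase i₂, f i :=
    (Finset.add_sum_erase _ f (Finset.mem_erase.mpr ⟨hne, mem_univ i₂⟩)).symm
  have hcard : ((univ.erase i₁).erase i₂).card = n - 2 := by
    rw [Finset.card_erase_of_mem (Finset.mem_erase.mpr ⟨hne, mem_univ i₂⟩),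
      Finset.card_erase_of_mem (mem_univ i₁), Finset.card_univ, Fintype.card_fin]
    omega
  have hbound : ∑ i ∈ (univ.erase i₁).erase i₂, f i ≤ ((n : ℝ) - 2) * (π / 2) := by
    calc ∑ i ∈ (univ.erase i₁).erase i₂, f i
        ≤ ((univ.erase i₁).erase i₂).card • (π / 2) :=
          Finset.sum_le_card_nsmul _ _ _ (fun i _ => (Real.arctan_lt_pi_div_two _).le)
      _ = ((n : ℝ) - 2) * (π / 2) := by
          rw [hcard, nsmul_eq_mul, Nat.cast_sub hn]
          norm_num
  have hkey : ε₀ ≤ Real.arctan (lam i₁) + Real.arctan (lam i₂) := by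
    have : f i₁ + f i₂ + ∑ i ∈ (univ.erase i₁).erase i₂, f i = σ := by
      rw [← hsum, h1, h2]; ring
    have hσ' : ((n : ℝ) - 2) * π / 2 + ε₀ ≤ σ := hσ
    simp only [hf] at this
    nlinarith [hbound]
  have hle : lam i₂ ≤ lam i₁ := hlam (by simp only [i₁, i₂, Fin.le_iff_val_le_val]; omega)
  exact key_arctan_pair hε hle hkey
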